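/- arXiv:1906.09729 — 2 statements merged into one kernel-verified Lean document; each statement's English description precedes it below -/
import Mathlib

section
/- Let L, L_1, …, L_d be integrable real random variables on a probability space (Ω,𝓕,P) with L = L_1 + ⋯ + L_d, let 1/2 ≤ α < 1, write e = e_α(L) and β* = P[L ≤ e], and assume P[L > e] > 0. Then for each k = 1, …, d, the Euler contribution of L_k to the expectile, (α·E[L_k·1_{L>e}] + (1−α)·E[L_k·1_{L≤e}]) / (α + (1−2α)β*), equals (1 − (1−α)/(α + (1−2α)β*))·E[L_k | L > e] + ((1−α)/(α + (1−2α)β*))·E[L_k]. -/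
open MeasureTheory Filter Topology Real Set
open scoped ENNReal

/-- Left-quantile function: `q_L(u) = inf {m : P[L ≤ m] ≥ u}`. -/
noncomputable def leftQuantile {Ω : Type*} [MeasurableSpace Ω] (P : Measure Ω)
    (L : Ω → ℝ) (u : ℝ) : ℝ :=
  sInf {m : ℝ | u ≤ (P {ω | L ω ≤ m}).toReal}

/-- Expected shortfall: `ES_α(L) = (1/(1-α)) ∫_α^1 q_L(u) du`. -/
noncomputable def ES {Ω : Type*} [MeasurableSpace Ω] (P : Measure Ω)
    (L : Ω → ℝ) (α : ℝ) : ℝ :=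
  (1 - α)⁻¹ * ∫ u in α..1, leftQuantile P L u

/-- The α-expectile is the (unique) `e` with `α E[(L-e)⁺] = (1-α) E[(L-e)⁻]`. -/
def IsExpectile {Ω : Type*} [MeasurableSpace Ω] (P : Measure Ω)
    (L : Ω → ℝ) (α e : ℝ) : Prop :=
  α * ∫ ω, max (L ω - e) 0 ∂P = (1 - α) * ∫ ω, max (e - L ω) 0 ∂P

/-- Loss function `ℓ_{a,b}(x) = x⁺/a - b x⁻`. -/
noncomputable def lossFn (a b x : ℝ) : ℝ := max x 0 / a - b * max (-x) 0

/-- Optimized certainty equivalent `R_{a,b}(L) = inf { m + E[ℓ_{a,b}(L-m)] }`. -/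
noncomputable def OCE {Ω : Type*} [MeasurableSpace Ω] (P : Measure Ω)
    (L : Ω → ℝ) (a b : ℝ) : ℝ :=
  sInf {r : ℝ | ∃ m : ℝ, r = m + ∫ ω, lossFn a b (L ω - m) ∂P}

/-- `g` is regularly varying at infinity with index `ρ`. -/
def RegularlyVarying (g : ℝ → ℝ) (ρ : ℝ) : Prop :=
  ∀ x : ℝ, 0 < x → Tendsto (fun t => g (t * x) / g t) atTop (𝓝 (x ^ ρ))

/-- `g` is of second-order regular variation with indices `-η`, `ρ` and auxiliary function `A`. -/
def SecondOrderRV (g : ℝ → ℝ) (η ρ : ℝ) (A : ℝ → ℝ) : Prop :=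
  RegularlyVarying g (-η) ∧
  Tendsto A atTop (𝓝 0) ∧
  ((∀ᶠ t in atTop, 0 < A t) ∨ (∀ᶠ t in atTop, A t < 0)) ∧
  ∀ x : ℝ, 0 < x →
    Tendsto (fun t => (g (t * x) / g t - x ^ (-η)) / A t) atTop
      (𝓝 (if ρ = 0 then x ^ (-η) * Real.log x else x ^ (-η) * (x ^ ρ - 1) / ρ))

/-- Empirical measure `(1/n) ∑_{k<n} δ_{L_k(ω)}` of the first `n` samples. -/
noncomputable def empMeasure {Ω : Type*} [MeasurableSpace Ω] (L : ℕ → Ω → ℝ)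
    (n : ℕ) (ω : Ω) : Measure ℝ :=
  (n : ℝ≥0∞)⁻¹ • ∑ k ∈ Finset.range n, Measure.dirac (L k ω)

/-- the Euler contribution of `L_k` to the expectile equals
`(1 - (1-α)/(α+(1-2α)β*))·E[L_k | L > e] + ((1-α)/(α+(1-2α)β*))·E[L_k]`,
where `e = e_α(L)` and `β* = P[L ≤ e]`. -/
theorem expectile_euler_contribution {Ω : Type*} [MeasurableSpace Ω] (P : Measure Ω)
    [IsProbabilityMeasure P] (d : ℕ) (Lk : Fin d → Ω → ℝ)
    (hLk : ∀ k, Integrable (Lk k) P) (L : Ω → ℝ)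
    (hLdef : L = fun ω => ∑ k, Lk k ω)
    (α : ℝ) (hα : 1 / 2 ≤ α) (hα1 : α < 1) (e : ℝ) (he : IsExpectile P L α e)
    (hpos : 0 < (P {ω | e < L ω}).toReal) (k : Fin d) :
    (α * ∫ ω in {ω | e < L ω}, Lk k ω ∂P +
        (1 - α) * ∫ ω in {ω | L ω ≤ e}, Lk k ω ∂P) /
      (α + (1 - 2 * α) * (P {ω | L ω ≤ e}).toReal) =
    (1 - (1 - α) / (α + (1 - 2 * α) * (P {ω | L ω ≤ e}).toReal)) *
        ((∫ ω in {ω | e < L ω}, Lk k ω ∂P) / (P {ω | e < L ω}).toReal) +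
      ((1 - α) / (α + (1 - 2 * α) * (P {ω | L ω ≤ e}).toReal)) * ∫ ω, Lk k ω ∂P := by
  have hL : Integrable L P := by
    rw [hLdef]; exact integrable_finset_sum _ (fun j _ => hLk j)
  have hns : NullMeasurableSet {ω | e < L ω} P :=
    nullMeasurableSet_lt aemeasurable_const hL.aemeasurable
  have hcompl : {ω | L ω ≤ e} = {ω | e < L ω}ᶜ := by
    ext ω; simp [not_lt]
  set s : Set Ω := {ω | e < L ω} with hs
  set p : ℝ := (P s).toReal with hp
  have hβ : (P {ω | L ω ≤ e}).toReal = 1 - p := by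
    rw [hcompl]
    have h1 : P sᶜ = 1 - P s := prob_compl_eq_one_sub₀ hns
    rw [h1, ENNReal.toReal_sub_of_le prob_le_one (by simp)]
    simp [hp]
  have hsplit : ∫ ω, Lk k ω ∂P = (∫ ω in s, Lk k ω ∂P) + ∫ ω in {ω | L ω ≤ e}, Lk k ω ∂P := by
    rw [hcompl, (integral_add_compl₀ hns (hLk k)).symm]
  have hp1 : p ≤ 1 := by
    rw [hp]
    calc (P s).toReal ≤ (1 : ℝ≥0∞).toReal :=
          ENNReal.toReal_mono (by simp) prob_le_one
      _ = 1 := by simp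
  have hD : 0 < α + (1 - 2 * α) * (1 - p) := by nlinarith [hpos]
  rw [hβ, hsplit]
  set A := ∫ ω in s, Lk k ω ∂P
  set B := ∫ ω in {ω | L ω ≤ e}, Lk k ω ∂P
  rw [one_sub_div hD.ne', div_mul_div_comm, div_mul_eq_mul_div, div_add_div _ _ (mul_ne_zero hD.ne' hpos.ne') hD.ne', div_eq_div_iff hD.ne' (mul_ne_zero (mul_ne_zero hD.ne' hpos.ne') hD.ne')]
  ring
end

section
/- Let L be an integrable real random variable with E[L] = 0 whose distribution function F has finite right endpoint x̂ = sup{x : F(x) < 1} < ∞ and belongs to the Weibull maximum domain of attraction MDA(Ψ_η) for some η > 0, i.e. the function t ↦ 1 − F(x̂ − 1/t) is regularly varying at infinity with index −η. Then, as α ↗ 1: (i) (1−α)/(1−β*) → 0, where β* = P[L ≤ e_α(L)]; and (ii) (x̂ − ES_α(L))/(x̂ − e_α(L)) → 0. -/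
open MeasureTheory Filter Topology Real Set
open scoped ENNReal

set_option linter.unusedSectionVars false

namespace WFO

variable {Ω : Type*} [MeasurableSpace Ω] {P : Measure Ω} [IsProbabilityMeasure P] {L : Ω → ℝ}

/-- distribution function -/
noncomputable def F (P : Measure Ω) (L : Ω → ℝ) (m : ℝ) : ℝ := (P {ω | L ω ≤ m}).toReal

lemma F_nonneg (m : ℝ) : 0 ≤ F P L m := ENNReal.toReal_nonneg

lemma F_le_one (m : ℝ) : F P L m ≤ 1 := by
  have h := prob_le_one (μ := P) (s := {ω | L ω ≤ m})
  have := ENNReal.toReal_mono (by simp) h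
  simpa [F] using this

lemma F_mono : Monotone (F P L) := fun a b hab => by
  unfold F
  exact ENNReal.toReal_mono (measure_ne_top P _)
    (measure_mono fun ω (h : L ω ≤ a) => h.trans hab)

lemma F_rightcont (hLm : Measurable L) {x c : ℝ}
    (h : ∀ y, x < y → c ≤ F P L y) : c ≤ F P L x := by
  set s : ℕ → Set Ω := fun n => {ω | L ω ≤ x + 1 / (n + 1)} with hs_def
  have hsm : ∀ n, MeasurableSet (s n) := fun n => measurableSet_le hLm measurable_const
  have hanti : Antitone s := by
    intro n m hnm ω hω
    have hω' : L ω ≤ x + 1 / (m + 1) := hω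
    have hnm' : (n:ℝ) ≤ m := Nat.cast_le.2 hnm
    have h1 : (1:ℝ) / (m + 1) ≤ 1 / (n + 1) := by
      apply one_div_le_one_div_of_le (by positivity); linarith
    show L ω ≤ x + 1 / (n + 1)
    linarith
  have hiInter : (⋂ n, s n) = {ω | L ω ≤ x} := by
    ext ω
    simp only [mem_iInter, hs_def, mem_setOf_eq]
    constructor
    · intro hall
      refine le_of_forall_pos_le_add fun ε hε => ?_
      obtain ⟨n, hn⟩ := exists_nat_one_div_lt hε
      exact (hall n).trans (by linarith)
    · intro hx n
      have : (0:ℝ) < 1 / (n + 1) := by positivity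
      linarith
  have htend : Tendsto (fun n => P (s n)) atTop (𝓝 (P {ω | L ω ≤ x})) := by
    have := tendsto_measure_iInter_atTop (μ := P) (s := s)
      (fun n => (hsm n).nullMeasurableSet) hanti ⟨0, measure_ne_top P _⟩
    rw [hiInter] at this
    exact this
  have htend' : Tendsto (fun n : ℕ => F P L (x + 1 / (n + 1))) atTop (𝓝 (F P L x)) := by
    have h2 : Tendsto (fun n : ℕ => (P (s n)).toReal) atTop (𝓝 ((P {ω | L ω ≤ x}).toReal)) :=
      (ENNReal.tendsto_toReal (measure_ne_top P _)).comp htend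
    exact h2
  refine ge_of_tendsto' htend' fun n => h _ ?_
  have : (0:ℝ) < 1 / ((n:ℝ) + 1) := by positivity
  linarith

lemma F_lt_one {xhat : ℝ} (hxhat : IsLUB {x : ℝ | F P L x < 1} xhat) {m : ℝ}
    (hm : m < xhat) : F P L m < 1 := by
  by_contra h
  push_neg at h
  have hub : m ∈ upperBounds {x : ℝ | F P L x < 1} := by
    intro y hy
    by_contra hym
    push_neg at hym
    exact absurd (h.trans (F_mono hym.le)) (not_le.2 hy)
  exact absurd (hxhat.2 hub) (not_le.2 hm)

lemma F_eq_one_of_gt {xhat : ℝ} (hxhat : IsLUB {x : ℝ | F P L x < 1} xhat) {m : ℝ}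
    (hm : xhat < m) : F P L m = 1 := by
  refine le_antisymm (F_le_one m) ?_
  by_contra h
  push_neg at h
  exact absurd (hxhat.1 h) (not_le.2 hm)

lemma F_xhat (hLm : Measurable L) {xhat : ℝ} (hxhat : IsLUB {x : ℝ | F P L x < 1} xhat) :
    F P L xhat = 1 :=
  le_antisymm (F_le_one _) (F_rightcont hLm fun y hy => (F_eq_one_of_gt hxhat hy).ge)

lemma measure_eq_one_of_F_eq_one {m : ℝ} (h : F P L m = 1) : P {ω | L ω ≤ m} = 1 := by
  unfold F at h
  have hne := measure_ne_top P {ω | L ω ≤ m}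
  rw [← ENNReal.ofReal_toReal hne, h]
  norm_num

lemma ae_le_of_F_eq_one (hLm : Measurable L) {m : ℝ} (h : F P L m = 1) :
    ∀ᵐ ω ∂P, L ω ≤ m := by
  have h1 := measure_eq_one_of_F_eq_one h
  have h2 := (prob_compl_eq_zero_iff (measurableSet_le hLm measurable_const)).2 h1
  rw [ae_iff]
  have hset : {a | ¬ L a ≤ m} = {ω | L ω ≤ m}ᶜ := by ext; simp
  rw [hset]
  exact h2

lemma F_eq_one_of_ae_le {m : ℝ} (hLm : Measurable L) (h : ∀ᵐ ω ∂P, L ω ≤ m) :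
    F P L m = 1 := by
  unfold F
  have : P {ω | L ω ≤ m}ᶜ = 0 := by
    have h0 : P {ω | ¬ (L ω ≤ m)} = 0 := ae_iff.1 h
    rw [show {ω | ¬ (L ω ≤ m)} = {ω | L ω ≤ m}ᶜ from by ext; simp] at h0
    exact h0
  have h1 := (prob_compl_eq_zero_iff (measurableSet_le hLm measurable_const)).1 this
  simp [h1]



lemma intA (hL : Integrable L P) (m : ℝ) :
    Integrable (fun ω => max (L ω - m) 0) P :=
  (hL.sub (integrable_const m)).pos_part

lemma intB (hL : Integrable L P) (m : ℝ) :
    Integrable (fun ω => max (m - L ω) 0) P :=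
  ((integrable_const m).sub hL).pos_part

lemma AB_identity (hL : Integrable L P) (hmean : (∫ ω, L ω ∂P) = 0) (m : ℝ) :
    (∫ ω, max (L ω - m) 0 ∂P) - (∫ ω, max (m - L ω) 0 ∂P) = -m := by
  rw [← integral_sub (intA hL m) (intB hL m)]
  have heq : (fun ω => max (L ω - m) 0 - max (m - L ω) 0) = fun ω => L ω - m := by
    funext ω
    have := max_zero_sub_max_neg_zero_eq_self (L ω - m)
    simpa [neg_sub] using this
  rw [heq, integral_sub hL (integrable_const m), hmean, integral_const]
  simp

lemma A_nonneg (m : ℝ) : 0 ≤ ∫ ω, max (L ω - m) 0 ∂P :=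
  integral_nonneg fun ω => le_max_right _ _

lemma B_nonneg (m : ℝ) : 0 ≤ ∫ ω, max (m - L ω) 0 ∂P :=
  integral_nonneg fun ω => le_max_right _ _

lemma A_anti (hL : Integrable L P) {a b : ℝ} (hab : a ≤ b) :
    (∫ ω, max (L ω - b) 0 ∂P) ≤ ∫ ω, max (L ω - a) 0 ∂P :=
  integral_mono (intA hL b) (intA hL a) fun ω =>
    max_le_max (by linarith) le_rfl

lemma B_mono (hL : Integrable L P) {a b : ℝ} (hab : a ≤ b) :
    (∫ ω, max (a - L ω) 0 ∂P) ≤ ∫ ω, max (b - L ω) 0 ∂P :=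
  integral_mono (intB hL a) (intB hL b) fun ω =>
    max_le_max (by linarith) le_rfl

lemma B_ge_c0 (hL : Integrable L P) {e : ℝ} (he : 0 ≤ e) :
    (∫ ω, max (-L ω) 0 ∂P) ≤ ∫ ω, max (e - L ω) 0 ∂P :=
  integral_mono hL.neg.pos_part (intB hL e) fun ω =>
    max_le_max (by linarith) le_rfl



end WFO

-- next chunk
namespace WFO
variable {Ω : Type*} [MeasurableSpace Ω] {P : Measure Ω} [IsProbabilityMeasure P] {L : Ω → ℝ}

lemma not_ae_zero {xhat η : ℝ} (hη : 0 < η)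
    (hxhat : IsLUB {x : ℝ | F P L x < 1} xhat)
    (hrv : RegularlyVarying (fun t => 1 - F P L (xhat - 1 / t)) (-η)) :
    ¬ (L =ᵐ[P] fun _ => (0:ℝ)) := by
  intro h0
  have hFm : ∀ m : ℝ, m < 0 → F P L m = 0 := by
    intro m hm
    have hset : {ω | L ω ≤ m} =ᵐ[P] (∅ : Set Ω) := by
      filter_upwards [h0] with ω hω
      show (L ω ≤ m) = False
      exact eq_false (by rw [hω]; exact not_le.2 hm)
    unfold F
    rw [measure_congr hset]
    simp
  have hFp : ∀ m : ℝ, 0 ≤ m → F P L m = 1 := by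
    intro m hm
    have hset : {ω | L ω ≤ m} =ᵐ[P] (univ : Set Ω) := by
      filter_upwards [h0] with ω hω
      show (L ω ≤ m) = True
      exact eq_true (by rw [hω]; exact hm)
    unfold F
    rw [measure_congr hset]
    simp
  have hset : {x : ℝ | F P L x < 1} = Iio 0 := by
    ext x
    simp only [mem_setOf_eq, mem_Iio]
    constructor
    · intro h
      by_contra hx
      push_neg at hx
      rw [hFp x hx] at h
      exact lt_irrefl _ h
    · intro h
      rw [hFm x h]
      norm_num
  have hx0 : xhat = 0 := by
    rw [hset] at hxhat
    exact hxhat.unique isLUB_Iio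
  have hg1 : ∀ u : ℝ, 1 ≤ u → 1 - F P L (xhat - 1 / u) = 1 := by
    intro u hu
    rw [hx0, hFm]
    · ring
    · have : (0:ℝ) < 1 / u := by positivity
      linarith
  have hev : (fun t => (1 - F P L (xhat - 1 / (t * 2))) / (1 - F P L (xhat - 1 / t)))
      =ᶠ[atTop] fun _ => (1:ℝ) := by
    filter_upwards [eventually_ge_atTop (1:ℝ)] with t ht
    rw [hg1 (t * 2) (by linarith), hg1 t ht]
    norm_num
  have htend := (hrv 2 two_pos).congr' hev
  have h1 : (1:ℝ) = 2 ^ (-η : ℝ) := tendsto_nhds_unique tendsto_const_nhds htend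
  have hlt : (2:ℝ) ^ (-η : ℝ) < 1 := rpow_lt_one_of_one_lt_of_neg one_lt_two (by linarith)
  linarith

lemma c0_pos (hL : Integrable L P) (hmean : (∫ ω, L ω ∂P) = 0)
    (hne : ¬ (L =ᵐ[P] fun _ => (0:ℝ))) :
    0 < ∫ ω, max (-L ω) 0 ∂P := by
  rcases lt_or_eq_of_le (integral_nonneg (fun ω => le_max_right _ _ :
      (0:Ω → ℝ) ≤ fun ω => max (-L ω) 0)) with h | h
  · exact h
  exfalso
  have hz : (fun ω => max (-L ω) 0) =ᵐ[P] 0 :=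
    (integral_eq_zero_iff_of_nonneg_ae (Filter.Eventually.of_forall fun ω => le_max_right _ _)
      hL.neg.pos_part).1 h.symm
  have hLnn : 0 ≤ᵐ[P] L := by
    filter_upwards [hz] with ω hω
    have : max (-L ω) 0 = 0 := hω
    have h2 : -L ω ≤ 0 := by
      by_contra hc
      push_neg at hc
      rw [max_eq_left hc.le] at this
      linarith
    linarith
  have hL0 : L =ᵐ[P] 0 :=
    (integral_eq_zero_iff_of_nonneg_ae hLnn hL).1 hmean
  exact hne hL0

lemma xhat_pos (hLm : Measurable L) (hL : Integrable L P) (hmean : (∫ ω, L ω ∂P) = 0)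
    (hne : ¬ (L =ᵐ[P] fun _ => (0:ℝ))) {xhat : ℝ}
    (hxhat : IsLUB {x : ℝ | F P L x < 1} xhat) : 0 < xhat := by
  by_contra hx
  push_neg at hx
  have hle : ∀ᵐ ω ∂P, L ω ≤ xhat := ae_le_of_F_eq_one hLm (F_xhat hLm hxhat)
  have hnn : 0 ≤ᵐ[P] fun ω => -L ω := by
    filter_upwards [hle] with ω hω
    simp only [Pi.zero_apply]
    linarith
  have hz : (∫ ω, -L ω ∂P) = 0 := by
    rw [integral_neg, hmean, neg_zero]
  have : (fun ω => -L ω) =ᵐ[P] 0 :=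
    (integral_eq_zero_iff_of_nonneg_ae hnn hL.neg).1 hz
  apply hne
  filter_upwards [this] with ω hω
  have : -L ω = 0 := hω
  linarith

lemma A_pos {xhat : ℝ} (hLm : Measurable L) (hL : Integrable L P)
    (hxhat : IsLUB {x : ℝ | F P L x < 1} xhat) {c : ℝ} (hc : c < xhat) :
    0 < ∫ ω, max (L ω - c) 0 ∂P := by
  rcases lt_or_eq_of_le (A_nonneg (P := P) (L := L) c) with h | h
  · exact h
  exfalso
  have hz : (fun ω => max (L ω - c) 0) =ᵐ[P] 0 :=
    (integral_eq_zero_iff_of_nonneg_ae (Filter.Eventually.of_forall fun ω => le_max_right _ _)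
      (intA hL c)).1 h.symm
  have hle : ∀ᵐ ω ∂P, L ω ≤ c := by
    filter_upwards [hz] with ω hω
    have : max (L ω - c) 0 = 0 := hω
    by_contra hc2
    push_neg at hc2
    rw [max_eq_left (by linarith)] at this
    linarith
  have : F P L c = 1 := F_eq_one_of_ae_le hLm hle
  exact absurd this (ne_of_lt (F_lt_one hxhat hc))


/-- The α-expectile equation (copy of IsExpectile shape). -/
lemma expectile_bounds {xhat : ℝ} (hLm : Measurable L) (hL : Integrable L P)
    (hmean : (∫ ω, L ω ∂P) = 0)
    (hxhat : IsLUB {x : ℝ | F P L x < 1} xhat)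
    (hc0 : 0 < ∫ ω, max (-L ω) 0 ∂P) (hx0 : 0 < xhat)
    {α ee : ℝ} (hα : 1 / 2 ≤ α) (hα1 : α < 1)
    (hexp : α * ∫ ω, max (L ω - ee) 0 ∂P = (1 - α) * ∫ ω, max (ee - L ω) 0 ∂P) :
    0 ≤ ee ∧ ee < xhat := by
  have hA := A_nonneg (P := P) (L := L) ee
  have hB := B_nonneg (P := P) (L := L) ee
  have hid := AB_identity hL hmean ee
  constructor
  · by_contra hee
    push_neg at hee
    -- A - B = -ee > 0
    have h1 : (1 - α) * (∫ ω, max (ee - L ω) 0 ∂P) ≤ (1/2) * ∫ ω, max (ee - L ω) 0 ∂P :=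
      mul_le_mul_of_nonneg_right (by linarith) hB
    have h3 : (1/2 : ℝ) * (∫ ω, max (L ω - ee) 0 ∂P) ≤ α * ∫ ω, max (L ω - ee) 0 ∂P :=
      mul_le_mul_of_nonneg_right hα hA
    nlinarith
  · by_contra hee
    push_neg at hee
    have hle : ∀ᵐ ω ∂P, L ω ≤ xhat := ae_le_of_F_eq_one hLm (F_xhat hLm hxhat)
    have hA0 : (∫ ω, max (L ω - ee) 0 ∂P) = 0 := by
      have heq : (∫ ω, max (L ω - ee) 0 ∂P) = ∫ (_ : Ω), (0:ℝ) ∂P := by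
        apply integral_congr_ae
        filter_upwards [hle] with ω hω
        exact max_eq_right (by linarith)
      simpa using heq
    rw [hA0, mul_zero] at hexp
    have hBe : (∫ ω, max (-L ω) 0 ∂P) ≤ ∫ ω, max (ee - L ω) 0 ∂P :=
      B_ge_c0 hL (by linarith)
    have : (∫ ω, max (ee - L ω) 0 ∂P) = 0 := by
      have h1α : (0:ℝ) < 1 - α := by linarith
      nlinarith
    linarith

lemma A_le {xhat : ℝ} (hLm : Measurable L) (hL : Integrable L P)
    (hxhat : IsLUB {x : ℝ | F P L x < 1} xhat)
    {ee : ℝ} (hee : ee ≤ xhat) :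
    (∫ ω, max (L ω - ee) 0 ∂P) ≤ (xhat - ee) * (1 - F P L ee) := by
  have hle : ∀ᵐ ω ∂P, L ω ≤ xhat := ae_le_of_F_eq_one hLm (F_xhat hLm hxhat)
  have hms : MeasurableSet {ω | L ω ≤ ee} := measurableSet_le hLm measurable_const
  have hint : Integrable ({ω | L ω ≤ ee}ᶜ.indicator fun _ => xhat - ee) P :=
    (integrable_const (xhat - ee)).indicator hms.compl
  have hmono : (fun ω => max (L ω - ee) 0) ≤ᵐ[P]
      {ω | L ω ≤ ee}ᶜ.indicator fun _ => xhat - ee := by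
    filter_upwards [hle] with ω hω
    by_cases h : L ω ≤ ee
    · have : max (L ω - ee) 0 = 0 := max_eq_right (by linarith)
      rw [this, Set.indicator_of_notMem (by simp [h])]
    · rw [Set.indicator_of_mem (by simp [h])]
      exact max_le (by linarith) (by linarith)
  calc (∫ ω, max (L ω - ee) 0 ∂P)
      ≤ ∫ ω, ({ω | L ω ≤ ee}ᶜ.indicator fun _ => xhat - ee) ω ∂P :=
        integral_mono_ae (intA hL ee) hint hmono
    _ = (P {ω | L ω ≤ ee}ᶜ).toReal * (xhat - ee) := by
        rw [integral_indicator_const _ hms.compl, smul_eq_mul, measureReal_def]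
    _ = (1 - F P L ee) * (xhat - ee) := by
        rw [measure_compl hms (measure_ne_top P _), measure_univ,
          ENNReal.toReal_sub_of_le prob_le_one (by simp)]
        simp [F]
    _ = (xhat - ee) * (1 - F P L ee) := mul_comm _ _

lemma exists_m0 (hLm : Measurable L) : ∃ m0 : ℝ, F P L m0 < 1/2 := by
  set s : ℕ → Set Ω := fun n => {ω | L ω ≤ -(n:ℝ)} with hs_def
  have hsm : ∀ n, MeasurableSet (s n) := fun n => measurableSet_le hLm measurable_const
  have hanti : Antitone s := by
    intro n m hnm ω hω
    have : L ω ≤ -(m:ℝ) := hω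
    have hnm' : (n:ℝ) ≤ m := Nat.cast_le.2 hnm
    show L ω ≤ -(n:ℝ)
    linarith
  have hiInter : (⋂ n, s n) = (∅ : Set Ω) := by
    ext ω
    simp only [mem_iInter, hs_def, mem_setOf_eq, mem_empty_iff_false, iff_false, not_forall]
    obtain ⟨n, hn⟩ := exists_nat_gt (-L ω)
    exact ⟨n, by push_neg; linarith⟩
  have htend : Tendsto (fun n => P (s n)) atTop (𝓝 0) := by
    have := tendsto_measure_iInter_atTop (μ := P) (s := s)
      (fun n => (hsm n).nullMeasurableSet) hanti ⟨0, measure_ne_top P _⟩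
    rw [hiInter] at this
    simp only [measure_empty] at this
    exact this
  have hev : ∀ᶠ n in atTop, P (s n) < ENNReal.ofReal (1/2) :=
    htend.eventually_lt_const (by simp [ENNReal.ofReal_pos])
  obtain ⟨n, hn⟩ := hev.exists
  exact ⟨-(n:ℝ), ENNReal.toReal_lt_of_lt_ofReal hn⟩


lemma leftQuantile_eq (u : ℝ) : leftQuantile P L u = sInf {m | u ≤ F P L m} := rfl

lemma S_mem_xhat {xhat : ℝ} (hFx : F P L xhat = 1) {u : ℝ} (hu : u ≤ 1) :
    xhat ∈ {m | u ≤ F P L m} := by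
  show u ≤ F P L xhat
  rw [hFx]; exact hu

lemma S_bddBelow {m0 : ℝ} (hm0 : F P L m0 < 1/2) {u : ℝ} (hu : 1/2 ≤ u) :
    BddBelow {m | u ≤ F P L m} := by
  refine ⟨m0, fun m hm => ?_⟩
  by_contra h
  push_neg at h
  have := F_mono (P := P) (L := L) h.le
  have hum : u ≤ F P L m := hm
  linarith

lemma q_le_xhat {xhat m0 : ℝ} (hFx : F P L xhat = 1) (hm0 : F P L m0 < 1/2)
    {u : ℝ} (hu2 : 1/2 ≤ u) (hu : u ≤ 1) : leftQuantile P L u ≤ xhat := by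
  rw [leftQuantile_eq]
  exact csInf_le (S_bddBelow hm0 hu2) (S_mem_xhat hFx hu)

lemma q_mono {xhat m0 : ℝ} (hFx : F P L xhat = 1) (hm0 : F P L m0 < 1/2)
    {u v : ℝ} (hu : 1/2 ≤ u) (huv : u ≤ v) (hv : v ≤ 1) :
    leftQuantile P L u ≤ leftQuantile P L v := by
  rw [leftQuantile_eq, leftQuantile_eq]
  exact csInf_le_csInf (S_bddBelow hm0 hu) ⟨xhat, S_mem_xhat hFx hv⟩
    (fun m hm => le_trans huv hm)

lemma F_q_ge (hLm : Measurable L) {xhat : ℝ} (hFx : F P L xhat = 1)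
    {α : ℝ} (hα1 : α ≤ 1) :
    α ≤ F P L (leftQuantile P L α) := by
  apply F_rightcont hLm
  intro y hy
  rw [leftQuantile_eq] at hy
  obtain ⟨m, hm, hmy⟩ := exists_lt_of_csInf_lt ⟨xhat, S_mem_xhat hFx hα1⟩ hy
  exact le_trans hm (F_mono hmy.le)

lemma q_intervalIntegrable {xhat m0 : ℝ} (hFx : F P L xhat = 1) (hm0 : F P L m0 < 1/2)
    {α : ℝ} (hα : 1/2 ≤ α) (hα1 : α ≤ 1) :
    IntervalIntegrable (leftQuantile P L) volume α 1 := by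
  apply MonotoneOn.intervalIntegrable
  rw [uIcc_of_le hα1]
  intro u hu v hv huv
  exact q_mono hFx hm0 (le_trans hα hu.1) huv hv.2

lemma ES_bounds {xhat m0 : ℝ} (hFx : F P L xhat = 1) (hm0 : F P L m0 < 1/2)
    {α : ℝ} (hα : 1/2 ≤ α) (hα1 : α < 1) :
    leftQuantile P L α ≤ ES P L α ∧ ES P L α ≤ xhat := by
  have hpos : (0:ℝ) < 1 - α := by linarith
  have hii := q_intervalIntegrable (P := P) (L := L) hFx hm0 hα hα1.le
  have hL1 : (1 - α) * leftQuantile P L α ≤ ∫ u in α..1, leftQuantile P L u := by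
    have h1 : (∫ _ in α..1, leftQuantile P L α) ≤ ∫ u in α..1, leftQuantile P L u :=
      intervalIntegral.integral_mono_on hα1.le intervalIntegrable_const hii
        (fun x hx => q_mono hFx hm0 hα hx.1 hx.2)
    simpa [intervalIntegral.integral_const, smul_eq_mul, mul_comm] using h1
  have hU1 : (∫ u in α..1, leftQuantile P L u) ≤ (1 - α) * xhat := by
    have h1 : (∫ u in α..1, leftQuantile P L u) ≤ ∫ _ in α..1, xhat :=
      intervalIntegral.integral_mono_on hα1.le hii intervalIntegrable_const
        (fun x hx => q_le_xhat hFx hm0 (le_trans hα hx.1) hx.2)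
    simpa [intervalIntegral.integral_const, smul_eq_mul, mul_comm] using h1
  constructor
  · have := mul_le_mul_of_nonneg_left hL1 (inv_nonneg.2 hpos.le)
    rw [← mul_assoc, inv_mul_cancel₀ hpos.ne', one_mul] at this
    exact this
  · have := mul_le_mul_of_nonneg_left hU1 (inv_nonneg.2 hpos.le)
    rw [← mul_assoc, inv_mul_cancel₀ hpos.ne', one_mul] at this
    exact this

end WFO


/-- for centered `L` in the Weibull MDA (`t ↦ 1-F(x̂-1/t) ∈ RV_{-η}`) with
finite right endpoint `x̂`, as `α ↗ 1`: `(1-α)/(1-β*) → 0` with `β* = P[L ≤ e_α(L)]`,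
and `(x̂ - ES_α(L))/(x̂ - e_α(L)) → 0`. -/
theorem weibull_first_order {Ω : Type*} [MeasurableSpace Ω] (P : Measure Ω)
    [IsProbabilityMeasure P] (L : Ω → ℝ) (hL : Integrable L P)
    (hmean : (∫ ω, L ω ∂P) = 0) (xhat : ℝ)
    (hxhat : IsLUB {x : ℝ | (P {ω | L ω ≤ x}).toReal < 1} xhat)
    (η : ℝ) (hη : 0 < η)
    (hrv : RegularlyVarying (fun t => 1 - (P {ω | L ω ≤ xhat - 1 / t}).toReal) (-η))
    (e : ℝ → ℝ) (he : ∀ α : ℝ, 1 / 2 ≤ α → α < 1 → IsExpectile P L α (e α)) :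
    Tendsto (fun α => (1 - α) / (1 - (P {ω | L ω ≤ e α}).toReal))
        (𝓝[<] (1 : ℝ)) (𝓝 0) ∧
      Tendsto (fun α => (xhat - ES P L α) / (xhat - e α)) (𝓝[<] (1 : ℝ)) (𝓝 0) := by
  obtain ⟨L', hL'sm, haeL⟩ : ∃ L', StronglyMeasurable L' ∧ L =ᵐ[P] L' :=
    ⟨hL.1.mk L, hL.1.stronglyMeasurable_mk, hL.1.ae_eq_mk⟩
  have hLm : Measurable L' := hL'sm.measurable
  have hPs : ∀ m : ℝ, P {ω | L ω ≤ m} = P {ω | L' ω ≤ m} := by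
    intro m
    apply measure_congr
    filter_upwards [haeL] with ω hω
    show (L ω ≤ m) = (L' ω ≤ m)
    rw [hω]
  have hq : leftQuantile P L = leftQuantile P L' := by
    funext u
    unfold leftQuantile
    congr 1
    ext m
    simp only [mem_setOf_eq]
    rw [hPs m]
  have hES : ES P L = ES P L' := by
    funext a
    unfold ES
    rw [hq]
  have hL2 : Integrable L' P := hL.congr haeL
  have hmean2 : (∫ ω, L' ω ∂P) = 0 := by rw [← integral_congr_ae haeL]; exact hmean
  have hxhat2 : IsLUB {x : ℝ | WFO.F P L' x < 1} xhat := by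
    have hseteq : {x : ℝ | (P {ω | L ω ≤ x}).toReal < 1}
        = {x : ℝ | (P {ω | L' ω ≤ x}).toReal < 1} := by
      ext x
      simp only [mem_setOf_eq]
      rw [hPs x]
    rw [hseteq] at hxhat
    exact hxhat
  have hrv2 : RegularlyVarying (fun t => 1 - WFO.F P L' (xhat - 1 / t)) (-η) := by
    have hfeq : (fun t => 1 - (P {ω | L ω ≤ xhat - 1 / t}).toReal)
        = fun t => 1 - (P {ω | L' ω ≤ xhat - 1 / t}).toReal := by
      funext t; rw [hPs]
    rw [hfeq] at hrv
    exact hrv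
  have he2 : ∀ a : ℝ, 1 / 2 ≤ a → a < 1 →
      a * (∫ ω, max (L' ω - e a) 0 ∂P) = (1 - a) * ∫ ω, max (e a - L' ω) 0 ∂P := by
    intro a h1 h2
    have h3 := he a h1 h2
    unfold IsExpectile at h3
    have i1 : (∫ ω, max (L ω - e a) 0 ∂P) = ∫ ω, max (L' ω - e a) 0 ∂P :=
      integral_congr_ae (haeL.mono fun ω hω => by
        show max (L ω - e a) 0 = max (L' ω - e a) 0
        rw [hω])
    have i2 : (∫ ω, max (e a - L ω) 0 ∂P) = ∫ ω, max (e a - L' ω) 0 ∂P :=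
      integral_congr_ae (haeL.mono fun ω hω => by
        show max (e a - L ω) 0 = max (e a - L' ω) 0
        rw [hω])
    rw [i1, i2] at h3
    exact h3
  rw [hES]
  have hgoalF : (fun α => (1 - α) / (1 - (P {ω | L ω ≤ e α}).toReal))
      = fun α => (1 - α) / (1 - WFO.F P L' (e α)) := by
    funext a
    rw [hPs]
    rfl
  rw [hgoalF]
  clear hrv hxhat he hL hmean haeL hq hES hgoalF hL'sm
  -- nondegeneracy
  have hne := WFO.not_ae_zero hη hxhat2 hrv2
  have hc0 : 0 < ∫ ω, max (-L' ω) 0 ∂P := WFO.c0_pos hL2 hmean2 hne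
  have hx0 : 0 < xhat := WFO.xhat_pos hLm hL2 hmean2 hne hxhat2
  have hFx : WFO.F P L' xhat = 1 := WFO.F_xhat hLm hxhat2
  obtain ⟨m0, hm0⟩ := WFO.exists_m0 (P := P) hLm
  set l := 𝓝[<] (1:ℝ) with hl
  have hαev : ∀ᶠ α in l, α ∈ Ioo (1/2 : ℝ) 1 :=
    Ioo_mem_nhdsLT_of_mem ⟨by norm_num, le_rfl⟩
  have h1α : Tendsto (fun α : ℝ => 1 - α) l (𝓝 0) := by
    have hcont : Continuous (fun α : ℝ => 1 - α) := continuous_const.sub continuous_id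
    have h := (hcont.tendsto (1:ℝ)).mono_left (nhdsWithin_le_nhds (s := Iio (1:ℝ)))
    simpa using h
  have heb : ∀ᶠ α in l, 0 ≤ e α ∧ e α < xhat := by
    filter_upwards [hαev] with α hα
    exact WFO.expectile_bounds hLm hL2 hmean2 hxhat2 hc0 hx0 hα.1.le hα.2 (he2 α hα.1.le hα.2)
  have hs0 : Tendsto (fun α => xhat - e α) l (𝓝 0) := by
    rw [Metric.tendsto_nhds]
    intro ε hε
    set c := max (xhat - ε) (xhat/2) with hc_def
    have hcx : c < xhat := max_lt (by linarith) (by linarith)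
    have hAc : 0 < ∫ ω, max (L' ω - c) 0 ∂P := WFO.A_pos hLm hL2 hxhat2 hcx
    have hBx : 0 ≤ ∫ ω, max (xhat - L' ω) 0 ∂P := WFO.B_nonneg _
    have hev2 : ∀ᶠ α in l, 1 - α <
        (∫ ω, max (L' ω - c) 0 ∂P) / (2 * ((∫ ω, max (xhat - L' ω) 0 ∂P) + 1)) :=
      h1α.eventually_lt_const (by positivity)
    filter_upwards [hαev, heb, hev2] with α h1 h2 h3
    have hce : c < e α := by
      by_contra hco
      push_neg at hco
      have hAce : (∫ ω, max (L' ω - c) 0 ∂P) ≤ ∫ ω, max (L' ω - e α) 0 ∂P :=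
        WFO.A_anti hL2 hco
      have hBec : (∫ ω, max (e α - L' ω) 0 ∂P) ≤ ∫ ω, max (xhat - L' ω) 0 ∂P :=
        WFO.B_mono hL2 h2.2.le
      have hexp := he2 α h1.1.le h1.2
      have hAe := WFO.A_nonneg (P := P) (L := L') (e α)
      rw [lt_div_iff₀ (by positivity)] at h3
      have k1 : (1/2 : ℝ) * (∫ ω, max (L' ω - c) 0 ∂P)
          ≤ α * ∫ ω, max (L' ω - e α) 0 ∂P := by nlinarith [h1.1]
      have k2 : (1 - α) * (∫ ω, max (e α - L' ω) 0 ∂P)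
          ≤ (1 - α) * ((∫ ω, max (xhat - L' ω) 0 ∂P) + 1) :=
        mul_le_mul_of_nonneg_left (by linarith) (by linarith [h1.2])
      linarith [hexp]
    rw [Real.dist_eq, sub_zero]
    have h4 : xhat - e α < ε := by
      have h5 : xhat - c ≤ ε := by
        have h6 := le_max_left (xhat - ε) (xhat/2)
        linarith [h6]
      linarith
    rw [abs_of_nonneg (by linarith [h2.2])]
    exact h4
  have hspos : ∀ᶠ α in l, 0 < xhat - e α := heb.mono fun α h => by linarith [h.2]
  have hτ : Tendsto (fun α => (xhat - e α)⁻¹) l atTop := by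
    have h := tendsto_nhdsWithin_iff.2 ⟨hs0, hspos.mono fun α h => h⟩
    exact tendsto_inv_nhdsGT_zero.comp h
  have hchain : ∀ᶠ α in l,
      (1 - α) * (∫ ω, max (-L' ω) 0 ∂P) ≤ (xhat - e α) * (1 - WFO.F P L' (e α)) := by
    filter_upwards [hαev, heb] with α h1 h2
    have hexp := he2 α h1.1.le h1.2
    have hBe : (∫ ω, max (-L' ω) 0 ∂P) ≤ ∫ ω, max (e α - L' ω) 0 ∂P :=
      WFO.B_ge_c0 hL2 h2.1
    have hAle := WFO.A_le hLm hL2 hxhat2 h2.2.le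
    have hApos := WFO.A_nonneg (P := P) (L := L') (e α)
    have h1a : (1 - α) * (∫ ω, max (-L' ω) 0 ∂P)
        ≤ (1 - α) * ∫ ω, max (e α - L' ω) 0 ∂P :=
      mul_le_mul_of_nonneg_left hBe (by linarith [h1.2])
    nlinarith [h1.1, h1.2]
  have hD : ∀ᶠ α in l, 0 < 1 - WFO.F P L' (e α) := heb.mono fun α h => by
    have := WFO.F_lt_one hxhat2 h.2
    linarith
  have part1 : Tendsto (fun α => (1 - α) / (1 - WFO.F P L' (e α))) l (𝓝 0) := by
    have hub : ∀ᶠ α in l, (1 - α) / (1 - WFO.F P L' (e α))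
        ≤ (xhat - e α) / (∫ ω, max (-L' ω) 0 ∂P) := by
      filter_upwards [hchain, hD] with α h1 h2
      rw [div_le_div_iff₀ h2 hc0]
      linarith [h1]
    have hlb : ∀ᶠ α in l, 0 ≤ (1 - α) / (1 - WFO.F P L' (e α)) := by
      filter_upwards [hαev, hD] with α h1 h2
      exact div_nonneg (by linarith [h1.2]) h2.le
    have hh : Tendsto (fun α => (xhat - e α) / (∫ ω, max (-L' ω) 0 ∂P)) l (𝓝 0) := by
      simpa using hs0.div_const _
    exact tendsto_of_tendsto_of_tendsto_of_le_of_le' tendsto_const_nhds hh hlb hub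
  have hGratio : ∀ lam : ℝ, 0 < lam →
      Tendsto (fun α => (1 - WFO.F P L' (xhat - lam * (xhat - e α)))
        / (1 - WFO.F P L' (e α))) l (𝓝 (lam ^ η)) := by
    intro lam hlam
    have h0 := (hrv2 (1/lam) (by positivity)).comp hτ
    have hval : ((1:ℝ)/lam) ^ (-η) = lam ^ η := by
      rw [one_div, Real.inv_rpow hlam.le, Real.rpow_neg hlam.le, inv_inv]
    rw [hval] at h0
    apply h0.congr'
    filter_upwards [hspos] with α hα
    have hsne : xhat - e α ≠ 0 := ne_of_gt hα
    have hlamne : lam ≠ 0 := ne_of_gt hlam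
    show (1 - WFO.F P L' (xhat - 1 / ((xhat - e α)⁻¹ * (1/lam))))
        / (1 - WFO.F P L' (xhat - 1 / (xhat - e α)⁻¹)) = _
    have e1 : (1:ℝ) / ((xhat - e α)⁻¹ * (1/lam)) = lam * (xhat - e α) := by
      field_simp
    have e2 : xhat - 1 / (xhat - e α)⁻¹ = e α := by
      rw [one_div, inv_inv]
      ring
    rw [e1, e2]
  have hFq : ∀ᶠ α in l, (α:ℝ) ≤ WFO.F P L' (leftQuantile P L' α) :=
    hαev.mono fun α h => WFO.F_q_ge hLm hFx h.2.le
  have hqx : ∀ᶠ α in l, leftQuantile P L' α ≤ xhat :=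
    hαev.mono fun α h => WFO.q_le_xhat hFx hm0 h.1.le h.2.le
  have hts : Tendsto (fun α => (xhat - leftQuantile P L' α) / (xhat - e α)) l (𝓝 0) := by
    rw [Metric.tendsto_nhds]
    intro ε hε
    set lam := min (ε/2) (1/2) with hlam_def
    have hlam0 : 0 < lam := lt_min (by linarith) (by norm_num)
    have hlamε : lam < ε := lt_of_le_of_lt (min_le_left _ _) (by linarith)
    have hrat := hGratio lam hlam0
    have hpη : 0 < lam ^ η := Real.rpow_pos_of_pos hlam0 _
    have hev1 : ∀ᶠ α in l, lam ^ η / 2 <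
        (1 - WFO.F P L' (xhat - lam * (xhat - e α))) / (1 - WFO.F P L' (e α)) :=
      hrat.eventually_const_lt (by linarith)
    have hev2 : ∀ᶠ α in l,
        (xhat - e α) / (∫ ω, max (-L' ω) 0 ∂P) < lam ^ η / 2 := by
      have hh : Tendsto (fun α => (xhat - e α) / (∫ ω, max (-L' ω) 0 ∂P)) l (𝓝 0) := by
        simpa using hs0.div_const _
      exact hh.eventually_lt_const (by linarith)
    filter_upwards [hαev, heb, hspos, hchain, hFq, hqx, hev1, hev2, hD]
      with α h1 h2 hsp hch hFqα hqxα he1 he2x hDp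
    have hkey : xhat - leftQuantile P L' α < lam * (xhat - e α) := by
      by_contra hco
      push_neg at hco
      have m1 : 1 - WFO.F P L' (xhat - lam * (xhat - e α))
          ≤ 1 - WFO.F P L' (leftQuantile P L' α) := by
        have := WFO.F_mono (P := P) (L := L')
          (show leftQuantile P L' α ≤ xhat - lam * (xhat - e α) by linarith)
        linarith
      have m2 : 1 - WFO.F P L' (leftQuantile P L' α) ≤ 1 - α := by linarith [hFqα]
      have m3 : (lam ^ η / 2) * (1 - WFO.F P L' (e α))
          < 1 - WFO.F P L' (xhat - lam * (xhat - e α)) := (lt_div_iff₀ hDp).1 he1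
      have m4 : (1 - α) ≤ (xhat - e α) * (1 - WFO.F P L' (e α)) / (∫ ω, max (-L' ω) 0 ∂P) := by
        rw [le_div_iff₀ hc0]
        linarith [hch]
      have m5 : (xhat - e α) * (1 - WFO.F P L' (e α)) / (∫ ω, max (-L' ω) 0 ∂P)
          < (lam ^ η / 2) * (1 - WFO.F P L' (e α)) := by
        have h7 : (xhat - e α) * (1 - WFO.F P L' (e α)) / (∫ ω, max (-L' ω) 0 ∂P)
            = ((xhat - e α) / (∫ ω, max (-L' ω) 0 ∂P)) * (1 - WFO.F P L' (e α)) := by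
          ring
        rw [h7]
        exact mul_lt_mul_of_pos_right he2x hDp
      linarith
    rw [Real.dist_eq, sub_zero,
      abs_of_nonneg (div_nonneg (by linarith [hqxα]) hsp.le), div_lt_iff₀ hsp]
    have h8 : lam * (xhat - e α) < ε * (xhat - e α) := mul_lt_mul_of_pos_right hlamε hsp
    linarith
  have part2 : Tendsto (fun α => (xhat - ES P L' α) / (xhat - e α)) l (𝓝 0) := by
    have hub : ∀ᶠ α in l, (xhat - ES P L' α) / (xhat - e α)
        ≤ (xhat - leftQuantile P L' α) / (xhat - e α) := by
      filter_upwards [hαev, hspos] with α h1 hsp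
      have hESb := WFO.ES_bounds (P := P) (L := L') hFx hm0 h1.1.le h1.2
      have h9 : xhat - ES P L' α ≤ xhat - leftQuantile P L' α := by linarith [hESb.1]
      exact (div_le_div_iff_of_pos_right hsp).2 h9
    have hlb : ∀ᶠ α in l, 0 ≤ (xhat - ES P L' α) / (xhat - e α) := by
      filter_upwards [hαev, hspos] with α h1 hsp
      have hESb := WFO.ES_bounds (P := P) (L := L') hFx hm0 h1.1.le h1.2
      exact div_nonneg (by linarith [hESb.2]) hsp.le
    exact tendsto_of_tendsto_of_tendsto_of_le_of_le' tendsto_const_nhds hts hlb hub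
  exact ⟨part1, part2⟩
end
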